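/- For p ∈ [1,∞], 1,p-approval voting is vote distance rationalizable with respect to the unanimity class using the layered-graph shortest-path metric: for every election E = ⟨v_1,...,v_m⟩, the singletons {c} minimizing min_{E'∈U_{{c}}} Σ_i d(v_i, v'_i) are exactly the candidates with maximal score s_p(c) = Σ_i 1[c∈v_i]/|v_i|^{1/p}, and the minimal distance for candidate c equals Σ_i |v_i|^{−1/p} − s_p(c). -/

import Mathlib

open scoped ENNReal BigOperators symmDiff

/-- Normalizer `|b|^{1/p}` for `p ∈ [1,∞]` (for `p = ∞` this is `|b|^0 = 1`). -/
noncomputable def wt (p : ℝ≥0∞) (card : ℕ) : ℝ := (card : ℝ) ^ (1 / p).toReal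

/-- Adjacency in the layered ballot graph: ballots differing in exactly one element. -/
def Adj {C : Type*} [DecidableEq C] (b b' : Finset C) : Prop := (b ∆ b').card = 1

/-- Cost of the edge between adjacent ballots: `1/|b|^{1/p}` where `b` is the smaller one. -/
noncomputable def edgeCost {C : Type*} (p : ℝ≥0∞) (b b' : Finset C) : ℝ :=
  (wt p (min b.card b'.card))⁻¹

/-- Total cost of a path, given as the list of its vertices. -/
noncomputable def pathCost {C : Type*} (p : ℝ≥0∞) : List (Finset C) → ℝ
  | [] => 0
  | [_] => 0
  | a :: b :: l => edgeCost p a b + pathCost p (b :: l)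

/-- `L` is a walk from `v` to `w` through nonempty ballots in the layered graph. -/
def IsWalk {C : Type*} [DecidableEq C] (L : List (Finset C)) (v w : Finset C) : Prop :=
  L.Chain' Adj ∧ L.head? = some v ∧ L.getLast? = some w ∧ ∀ b ∈ L, b.Nonempty

/-- Shortest-path distance between ballots in the layered graph. -/
noncomputable def gdist {C : Type*} [DecidableEq C] (p : ℝ≥0∞) (v w : Finset C) : ℝ :=
  sInf {x : ℝ | ∃ L : List (Finset C), IsWalk L v w ∧ x = pathCost p L}

/-- Minimal distance from election `E` to a unanimous election all of whose
ballots contain `c`, under the coordinatewise sum of the layered-graph metric. -/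
noncomputable def elecDist {C : Type*} [Fintype C] [DecidableEq C] (p : ℝ≥0∞)
    {m : ℕ} (E : Fin m → Finset C) (c : C) : ℝ :=
  sInf {x : ℝ | ∃ E' : Fin m → Finset C,
    (∀ i, c ∈ E' i ∧ (E' i).Nonempty) ∧ x = ∑ i, gdist p (E i) (E' i)}

/-- Score `s_p(c) = Σ_i 1[c ∈ v_i]/|v_i|^{1/p}`. -/
noncomputable def elecScore {C : Type*} [DecidableEq C] (p : ℝ≥0∞)
    {m : ℕ} (E : Fin m → Finset C) (c : C) : ℝ :=
  ∑ i, if c ∈ E i then (wt p (E i).card)⁻¹ else 0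

section
variable {C : Type*} [DecidableEq C] (p : ℝ≥0∞)

noncomputable def phi (c : C) (b : Finset C) : ℝ :=
  if c ∈ b then 0 else (wt p b.card)⁻¹

lemma wt_nonneg (n : ℕ) : 0 ≤ wt p n := Real.rpow_nonneg (Nat.cast_nonneg n) _

lemma wt_pos {n : ℕ} (hn : 0 < n) : 0 < wt p n :=
  Real.rpow_pos_of_pos (by exact_mod_cast hn) _

lemma inv_wt_anti {j k : ℕ} (hj : 0 < j) (hjk : j ≤ k) : (wt p k)⁻¹ ≤ (wt p j)⁻¹ := by
  have := Real.rpow_le_rpow (Nat.cast_nonneg j) (by exact_mod_cast hjk : (j:ℝ) ≤ k)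
    ENNReal.toReal_nonneg (z := (1/p).toReal)
  exact inv_anti₀ (wt_pos p hj) this

lemma edgeCost_nonneg (b b' : Finset C) : 0 ≤ edgeCost p b b' :=
  inv_nonneg.mpr (wt_nonneg p _)

lemma phi_nonneg (c : C) (b : Finset C) : 0 ≤ phi p c b := by
  unfold phi; split <;> [rfl; exact inv_nonneg.mpr (wt_nonneg p _)]

lemma phi_le (c : C) (b : Finset C) : phi p c b ≤ (wt p b.card)⁻¹ := by
  unfold phi; split <;> [exact inv_nonneg.mpr (wt_nonneg p _); rfl]

lemma phi_sub_le (c : C) {b b' : Finset C} (hb : b.Nonempty) (hb' : b'.Nonempty) :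
    phi p c b - phi p c b' ≤ edgeCost p b b' := by
  have h1 : phi p c b ≤ edgeCost p b b' := by
    refine (phi_le p c b).trans (inv_wt_anti p ?_ (min_le_left _ _))
    exact lt_min (Finset.card_pos.mpr hb) (Finset.card_pos.mpr hb')
  have h2 := phi_nonneg p c b'
  linarith

lemma pathCost_nonneg : ∀ L : List (Finset C), 0 ≤ pathCost p L
  | [] => le_refl 0
  | [_] => le_refl 0
  | a :: b :: l => add_nonneg (edgeCost_nonneg p a b) (pathCost_nonneg (b :: l))

lemma pathCost_ge (c : C) : ∀ (L : List (Finset C)) (v w : Finset C),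
    (∀ b ∈ L, b.Nonempty) → L.head? = some v → L.getLast? = some w →
    phi p c v - phi p c w ≤ pathCost p L
  | [], v, w, _, h, _ => by simp at h
  | [a], v, w, _, h1, h2 => by
      simp only [List.head?] at h1
      simp only [List.getLast?] at h2
      obtain rfl : a = v := by injection h1
      obtain rfl : a = w := by simpa using h2
      simp [pathCost]
  | a :: b :: l, v, w, hne, h1, h2 => by
      obtain rfl : a = v := by injection h1
      have h2' : (b :: l).getLast? = some w := by
        rwa [List.getLast?_cons_cons] at h2
      have ih := pathCost_ge c (b :: l) b w (fun x hx => hne x (List.mem_cons_of_mem _ hx))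
        rfl h2'
      have he := phi_sub_le p c (hne a (by simp)) (hne b (by simp))
      show phi p c a - phi p c w ≤ edgeCost p a b + pathCost p (b :: l)
      linarith

lemma isWalk_cons {L : List (Finset C)} {u v w : Finset C} (hL : IsWalk L u w)
    (hadj : Adj v u) (hv : v.Nonempty) : IsWalk (v :: L) v w := by
  obtain ⟨hc, hh, hl, hn⟩ := hL
  refine ⟨?_, rfl, ?_, ?_⟩
  · simp only [List.Chain', List.isChain_cons]
    exact ⟨fun b hb => by rw [hh] at hb; injection hb with h; rwa [← h], hc⟩
  · cases L with
    | nil => simp at hh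
    | cons a l => rwa [List.getLast?_cons_cons]
  · rintro b hb
    rcases List.mem_cons.mp hb with rfl | hb
    · exact hv
    · exact hn b hb

lemma adj_insert {x : C} {v : Finset C} (hx : x ∉ v) : Adj v (insert x v) := by
  have : v ∆ insert x v = {x} := by
    ext a
    simp only [Finset.mem_symmDiff, Finset.mem_insert, Finset.mem_singleton]
    constructor
    · rintro (⟨ha, h⟩ | ⟨(rfl | ha), h⟩) <;> tauto
    · rintro rfl; tauto
  simp [Adj, this]

lemma adj_erase {x : C} {v : Finset C} (hx : x ∈ v) : Adj v (v.erase x) := by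
  have : v ∆ v.erase x = {x} := by
    ext a
    simp only [Finset.mem_symmDiff, Finset.mem_erase, Finset.mem_singleton]
    constructor
    · rintro (⟨ha, h⟩ | ⟨⟨h1, h2⟩, h3⟩) <;> tauto
    · rintro rfl; tauto
  simp [Adj, this]

lemma existsWalk : ∀ (n : ℕ) (v w : Finset C), (v ∆ w).card ≤ n →
    v.Nonempty → w.Nonempty → ∃ L, IsWalk L v w := by
  intro n
  induction n with
  | zero =>
    intro v w h hv hw
    have : v ∆ w = ∅ := Finset.card_eq_zero.mp (Nat.le_zero.mp h)
    obtain rfl : v = w := symmDiff_eq_bot.mp this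
    exact ⟨[v], by simp [IsWalk, List.Chain'], by simpa using hv⟩
  | succ n ih =>
    intro v w h hv hw
    by_cases hvw : v = w
    · subst hvw; exact ⟨[v], by simp [IsWalk, List.Chain'], by simpa using hv⟩
    by_cases hsub : (w \ v).Nonempty
    · obtain ⟨x, hx⟩ := hsub
      rw [Finset.mem_sdiff] at hx
      have hmem : x ∈ v ∆ w := by
        simp [Finset.mem_symmDiff]; tauto
      have hsubset : (insert x v) ∆ w ⊆ (v ∆ w).erase x := by
        intro a ha
        simp only [Finset.mem_symmDiff, Finset.mem_insert] at ha
        simp only [Finset.mem_erase, Finset.mem_symmDiff]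
        rcases ha with ⟨(rfl | ha), h2⟩ | ⟨h1, h2⟩
        · exact absurd hx.1 h2
        · exact ⟨fun he => h2 (he ▸ hx.1), Or.inl ⟨ha, h2⟩⟩
        · exact ⟨fun he => h2 (Or.inl he), Or.inr ⟨h1, fun hv' => h2 (Or.inr hv')⟩⟩
      have hcard : ((insert x v) ∆ w).card ≤ n := by
        have := Finset.card_le_card hsubset
        rw [Finset.card_erase_of_mem hmem] at this
        omega
      obtain ⟨L, hL⟩ := ih (insert x v) w hcard (Finset.insert_nonempty _ _) hw
      exact ⟨v :: L, isWalk_cons hL (adj_insert hx.2) hv⟩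
    · have hws : w ⊆ v := by
        intro a ha
        by_contra hav
        exact hsub ⟨a, Finset.mem_sdiff.mpr ⟨ha, hav⟩⟩
      have hvs : (v \ w).Nonempty := by
        rw [Finset.sdiff_nonempty]
        intro hvw'
        exact hvw (Finset.Subset.antisymm hvw' hws)
      obtain ⟨x, hx⟩ := hvs
      rw [Finset.mem_sdiff] at hx
      have hmem : x ∈ v ∆ w := by
        simp [Finset.mem_symmDiff]; tauto
      have hsubset : (v.erase x) ∆ w ⊆ (v ∆ w).erase x := by
        intro a ha
        simp only [Finset.mem_symmDiff, Finset.mem_erase] at ha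
        simp only [Finset.mem_erase, Finset.mem_symmDiff]
        rcases ha with ⟨⟨h1, h2⟩, h3⟩ | ⟨h1, h2⟩
        · exact ⟨h1, Or.inl ⟨h2, h3⟩⟩
        · exact ⟨fun he => hx.2 (he ▸ h1), Or.inr ⟨h1, fun hv' => h2 ⟨fun he => hx.2 (he ▸ h1), hv'⟩⟩⟩
      have hcard : ((v.erase x) ∆ w).card ≤ n := by
        have := Finset.card_le_card hsubset
        rw [Finset.card_erase_of_mem hmem] at this
        omega
      have hne : (v.erase x).Nonempty := hw.mono (fun a ha => Finset.mem_erase.mpr ⟨fun he => hx.2 (he ▸ ha), hws ha⟩)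
      obtain ⟨L, hL⟩ := ih (v.erase x) w hcard hne hw
      exact ⟨v :: L, isWalk_cons hL (adj_erase hx.1) hv⟩

lemma gdist_bddBelow (v w : Finset C) :
    BddBelow {x : ℝ | ∃ L : List (Finset C), IsWalk L v w ∧ x = pathCost p L} := by
  refine ⟨0, ?_⟩
  rintro x ⟨L, _, rfl⟩
  exact pathCost_nonneg p L

lemma gdist_ge_phi {c : C} {v w : Finset C} (hv : v.Nonempty) (hw : w.Nonempty)
    (hc : c ∈ w) : phi p c v ≤ gdist p v w := by
  apply le_csInf
  · obtain ⟨L, hL⟩ := existsWalk (v ∆ w).card v w le_rfl hv hw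
    exact ⟨pathCost p L, L, hL, rfl⟩
  · rintro x ⟨L, ⟨h1, h2, h3, h4⟩, rfl⟩
    have := pathCost_ge p c L v w h4 h2 h3
    have hw0 : phi p c w = 0 := if_pos hc
    linarith

lemma gdist_insert_eq {c : C} {v : Finset C} (hv : v.Nonempty) :
    gdist p v (insert c v) = phi p c v := by
  apply le_antisymm
  · by_cases hc : c ∈ v
    · rw [Finset.insert_eq_self.mpr hc]
      have : gdist p v v ≤ pathCost p [v] :=
        csInf_le (gdist_bddBelow p v v) ⟨[v], ⟨by simp [List.Chain'], rfl, rfl, by simpa using hv⟩, rfl⟩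
      simpa [pathCost, phi, hc] using this
    · have hw : IsWalk [v, insert c v] v (insert c v) := by
        refine ⟨?_, rfl, rfl, ?_⟩
        · simp [List.Chain', List.isChain_cons_cons, adj_insert hc]
        · intro b hb
          rcases List.mem_cons.mp hb with rfl | hb
          · exact hv
          · simp at hb; subst hb; exact Finset.insert_nonempty _ _
      have h1 : gdist p v (insert c v) ≤ pathCost p [v, insert c v] :=
        csInf_le (gdist_bddBelow p _ _) ⟨_, hw, rfl⟩
      have h2 : pathCost p [v, insert c v] = (wt p v.card)⁻¹ := by
        simp only [pathCost, edgeCost, Finset.card_insert_of_notMem hc, add_zero]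
        congr 1
        rw [min_eq_left (Nat.le_succ _)]
      rw [h2] at h1
      simpa [phi, hc] using h1
  · exact gdist_ge_phi p hv (Finset.insert_nonempty _ _) (Finset.mem_insert_self _ _)

end

theorem stmt15 {C : Type*} [Fintype C] [DecidableEq C]
    (p : ℝ≥0∞) (hp : 1 ≤ p)
    {m : ℕ} (E : Fin m → Finset C) (hE : ∀ i, (E i).Nonempty) :
    (∀ c : C, elecDist p E c = (∑ i, (wt p (E i).card)⁻¹) - elecScore p E c) ∧
    {c : C | ∀ c' : C, elecDist p E c ≤ elecDist p E c'} =
      {c : C | ∀ c' : C, elecScore p E c' ≤ elecScore p E c} := by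
  have gdist_nonneg : ∀ v w : Finset C, 0 ≤ gdist p v w := by
    intro v w
    apply Real.sInf_nonneg
    rintro x ⟨L, _, rfl⟩
    exact pathCost_nonneg p L
  have key : ∀ c : C, elecDist p E c = ∑ i, phi p c (E i) := by
    intro c
    have hmem : (∑ i, phi p c (E i)) ∈
        {x : ℝ | ∃ E' : Fin m → Finset C,
          (∀ i, c ∈ E' i ∧ (E' i).Nonempty) ∧ x = ∑ i, gdist p (E i) (E' i)} := by
      refine ⟨fun i => insert c (E i),
        fun i => ⟨Finset.mem_insert_self _ _, Finset.insert_nonempty _ _⟩, ?_⟩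
      exact (Finset.sum_congr rfl fun i _ => (gdist_insert_eq p (hE i)).symm)
    apply le_antisymm
    · refine csInf_le ⟨0, ?_⟩ hmem
      rintro x ⟨E', hE', rfl⟩
      exact Finset.sum_nonneg fun i _ => gdist_nonneg _ _
    · refine le_csInf ⟨_, hmem⟩ ?_
      rintro x ⟨E', hE', rfl⟩
      exact Finset.sum_le_sum fun i _ => gdist_ge_phi p (hE i) (hE' i).2 (hE' i).1
  have key2 : ∀ c : C, elecDist p E c = (∑ i, (wt p (E i).card)⁻¹) - elecScore p E c := by
    intro c
    rw [key c, elecScore, ← Finset.sum_sub_distrib]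
    refine Finset.sum_congr rfl fun i _ => ?_
    unfold phi
    split <;> ring
  refine ⟨key2, ?_⟩
  ext c
  simp only [Set.mem_setOf_eq]
  constructor
  · intro h c'
    have := h c'
    rw [key2 c, key2 c'] at this
    linarith
  · intro h c'
    have := h c'
    rw [key2 c, key2 c']
    linarith
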